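/- Let p>1, δ>1, Q≥2, q<0. Suppose F is a continuous real-valued function on Ω_ε := {(x,y): x>0, x^p ≤ y ≤ ε^p x^p} satisfying: (a) F(c, c^p) ≥ c^q for every c>0; and (b) for every weight w ∈ RH_p^{δ,d}(J) with Db^d(w) ≤ Q and every dyadic interval I ∈ D(J) with children I^±, F(⟨w⟩_I, ⟨w^p⟩_I) ≥ (1/2)·[F(⟨w⟩_{I^+}, ⟨w^p⟩_{I^+}) + F(⟨w⟩_{I^-}, ⟨w^p⟩_{I^-})]. Then for every weight w ∈ RH_p^{δ,d}(J) with Db^d(w) ≤ Q one has ⟨w^q⟩_J ≤ F(⟨w⟩_J, ⟨w^p⟩_J). -/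

import Mathlib

open MeasureTheory Set Filter Topology NNReal ENNReal

/-- The dyadic interval `[n·2^(-k), (n+1)·2^(-k)]`. -/
noncomputable def dIcc (n k : ℕ) : Set ℝ :=
  Set.Icc ((n : ℝ) * 2 ^ (-(k : ℤ))) (((n : ℝ) + 1) * 2 ^ (-(k : ℤ)))

/-- The average `⟨f⟩_I` of `f` over the dyadic interval `I = [n·2^(-k), (n+1)·2^(-k)]`. -/
noncomputable def avg (f : ℝ → ℝ) (n k : ℕ) : ℝ :=
  (2 : ℝ) ^ (k : ℤ) * ∫ x in dIcc n k, f x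

namespace S8

lemma two_zpow_pos (k : ℤ) : (0:ℝ) < 2 ^ k := zpow_pos two_pos k

lemma volume_dIcc (n k : ℕ) : (volume (dIcc n k)) = ENNReal.ofReal ((2:ℝ) ^ (-(k:ℤ))) := by
  rw [dIcc, Real.volume_Icc]
  congr 1
  ring

lemma volume_dIcc_toReal (n k : ℕ) : (volume (dIcc n k)).toReal = (2:ℝ) ^ (-(k:ℤ)) := by
  rw [volume_dIcc, ENNReal.toReal_ofReal (two_zpow_pos _).le]

lemma volume_dIcc_ne_zero (n k : ℕ) : volume (dIcc n k) ≠ 0 := by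
  rw [volume_dIcc]
  simp only [ne_eq, ENNReal.ofReal_eq_zero, not_le]
  exact two_zpow_pos _

lemma volume_dIcc_ne_top (n k : ℕ) : volume (dIcc n k) ≠ ⊤ := by
  rw [volume_dIcc]; exact ENNReal.ofReal_ne_top

lemma dIcc_subset_Ici (n k : ℕ) : dIcc n k ⊆ Ici (0:ℝ) := by
  intro t ht
  have := ht.1
  have : (0:ℝ) ≤ (n:ℝ) * 2 ^ (-(k:ℤ)) := by positivity
  exact le_trans this ht.1

lemma avg_eq_setAverage (f : ℝ → ℝ) (n k : ℕ) : avg f n k = ⨍ x in dIcc n k, f x := by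
  rw [setAverage_eq, avg, measureReal_def, volume_dIcc_toReal, smul_eq_mul, ← zpow_neg, neg_neg]

lemma integrableOn_dIcc {f : ℝ → ℝ} (hf : LocallyIntegrable f volume) (n k : ℕ) :
    IntegrableOn f (dIcc n k) volume :=
  hf.integrableOn_isCompact isCompact_Icc

lemma avg_congr {f g : ℝ → ℝ} {n k : ℕ} (h : EqOn f g (dIcc n k)) : avg f n k = avg g n k := by
  have : ∫ x in dIcc n k, f x = ∫ x in dIcc n k, g x :=
    setIntegral_congr_fun (by rw [dIcc]; exact measurableSet_Icc) h
  rw [avg, avg, this]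

lemma avg_const (c : ℝ) (n k : ℕ) : avg (fun _ => c) n k = c := by
  rw [avg, setIntegral_const, measureReal_def, volume_dIcc_toReal, smul_eq_mul, ← mul_assoc,
    ← zpow_add₀ (two_ne_zero (α := ℝ))]
  simp

lemma avg_nonneg {f : ℝ → ℝ} {n k : ℕ} (h : ∀ᵐ t ∂(volume : Measure ℝ), 0 ≤ f t) :
    0 ≤ avg f n k := by
  have : 0 ≤ ∫ x in dIcc n k, f x :=
    setIntegral_nonneg_of_ae (h.mono fun t ht => ht)
  have h2 := (two_zpow_pos (k:ℤ)).le
  exact mul_nonneg h2 this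

lemma avg_pos {f : ℝ → ℝ} {n k : ℕ} (hf : IntegrableOn f (dIcc n k) volume)
    (h : ∀ᵐ t ∂(volume : Measure ℝ), 0 < f t) : 0 < avg f n k := by
  have hae : 0 ≤ᶠ[ae (volume.restrict (dIcc n k))] f :=
    ae_restrict_of_ae (h.mono fun t ht => ht.le)
  have : 0 < ∫ x in dIcc n k, f x := by
    rw [setIntegral_pos_iff_support_of_nonneg_ae hae hf]
    have hsupp : ∀ᵐ t ∂(volume : Measure ℝ), t ∈ Function.support f :=
      h.mono fun t ht => ne_of_gt ht
    have : volume (dIcc n k \ Function.support f) = 0 := by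
      have := ae_iff.mp hsupp
      exact measure_mono_null (fun t ht => by simpa using ht.2) this
    have hmono : volume (dIcc n k) ≤ volume (Function.support f ∩ dIcc n k) + 0 := by
      calc volume (dIcc n k) ≤ volume ((Function.support f ∩ dIcc n k) ∪ (dIcc n k \ Function.support f)) := by
            apply measure_mono; intro t ht
            by_cases hs : t ∈ Function.support f
            · exact Or.inl ⟨hs, ht⟩
            · exact Or.inr ⟨ht, hs⟩
        _ ≤ volume (Function.support f ∩ dIcc n k) + volume (dIcc n k \ Function.support f) :=
            measure_union_le _ _
        _ = _ := by rw [this]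
    rw [add_zero] at hmono
    have h0 : (0:ENNReal) < volume (dIcc n k) := pos_iff_ne_zero.mpr (volume_dIcc_ne_zero n k)
    exact lt_of_lt_of_le h0 hmono
  rw [avg]
  exact mul_pos (two_zpow_pos _) this



lemma zpow_negsucc (k : ℕ) : (2:ℝ) ^ (-((k:ℤ)+1)) = 2 ^ (-(k:ℤ)) / 2 := by
  rw [neg_add, zpow_add₀ (two_ne_zero (α := ℝ)), zpow_neg_one]
  ring

lemma dIcc_left (n k : ℕ) : dIcc (2*n) (k+1) =
    Icc ((n:ℝ) * 2 ^ (-(k:ℤ))) (((2*n:ℕ):ℝ) * 2 ^ (-(k:ℤ)) / 2 + 2 ^ (-(k:ℤ)) / 2) := by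
  have e1 : (((2*n:ℕ)):ℝ) * 2 ^ (-((k+1:ℕ):ℤ)) = (n:ℝ) * 2 ^ (-(k:ℤ)) := by
    push_cast [zpow_negsucc k]; ring
  have e2 : ((((2*n:ℕ)):ℝ)+1) * 2 ^ (-((k+1:ℕ):ℤ))
      = ((2*n:ℕ):ℝ) * 2 ^ (-(k:ℤ)) / 2 + 2 ^ (-(k:ℤ)) / 2 := by
    push_cast [zpow_negsucc k]; ring
  rw [dIcc, e1, e2]

lemma dIcc_right (n k : ℕ) : dIcc (2*n+1) (k+1) =
    Icc (((2*n:ℕ):ℝ) * 2 ^ (-(k:ℤ)) / 2 + 2 ^ (-(k:ℤ)) / 2) (((n:ℝ)+1) * 2 ^ (-(k:ℤ))) := by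
  have e1 : (((2*n+1:ℕ)):ℝ) * 2 ^ (-((k+1:ℕ):ℤ))
      = ((2*n:ℕ):ℝ) * 2 ^ (-(k:ℤ)) / 2 + 2 ^ (-(k:ℤ)) / 2 := by
    push_cast [zpow_negsucc k]; ring
  have e2 : ((((2*n+1:ℕ)):ℝ)+1) * 2 ^ (-((k+1:ℕ):ℤ)) = ((n:ℝ)+1) * 2 ^ (-(k:ℤ)) := by
    push_cast [zpow_negsucc k]; ring
  rw [dIcc, e1, e2]

lemma avg_split {f : ℝ → ℝ} {n k : ℕ} (hf : IntegrableOn f (dIcc n k) volume) :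
    avg f n k = (avg f (2*n) (k+1) + avg f (2*n+1) (k+1)) / 2 := by
  set a : ℝ := (n:ℝ) * 2 ^ (-(k:ℤ)) with ha
  set b : ℝ := ((2*n:ℕ):ℝ) * 2 ^ (-(k:ℤ)) / 2 + 2 ^ (-(k:ℤ)) / 2 with hb
  set c : ℝ := ((n:ℝ)+1) * 2 ^ (-(k:ℤ)) with hc
  have hab : a ≤ b := by
    rw [ha, hb]; push_cast; nlinarith [two_zpow_pos (-(k:ℤ))]
  have hbc : b ≤ c := by
    rw [hb, hc]; push_cast; nlinarith [two_zpow_pos (-(k:ℤ))]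
  have hIcc : dIcc n k = Icc a c := rfl
  have h1 : IntegrableOn f (Ioc a b) volume := by
    apply hf.mono_set; rw [hIcc]; exact fun t ht => ⟨le_of_lt ht.1, le_trans ht.2 hbc⟩
  have h2 : IntegrableOn f (Ioc b c) volume := by
    apply hf.mono_set; rw [hIcc]; exact fun t ht => ⟨le_trans hab (le_of_lt ht.1), ht.2⟩
  have hsplit : ∫ x in dIcc n k, f x = (∫ x in Ioc a b, f x) + ∫ x in Ioc b c, f x := by
    rw [hIcc, integral_Icc_eq_integral_Ioc, ← Ioc_union_Ioc_eq_Ioc hab hbc,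
      setIntegral_union (Ioc_disjoint_Ioc_of_le le_rfl) measurableSet_Ioc h1 h2]
  have hL : ∫ x in dIcc (2*n) (k+1), f x = ∫ x in Ioc a b, f x := by
    rw [dIcc_left, integral_Icc_eq_integral_Ioc]
  have hR : ∫ x in dIcc (2*n+1) (k+1), f x = ∫ x in Ioc b c, f x := by
    rw [dIcc_right, integral_Icc_eq_integral_Ioc]
  rw [avg, avg, avg, hL, hR, hsplit]
  push_cast [zpow_add₀ (two_ne_zero (α := ℝ))]
  ring

lemma sum_range_two_mul (f : ℕ → ℝ) (n : ℕ) :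
    ∑ m ∈ Finset.range (2*n), f m = ∑ m ∈ Finset.range n, (f (2*m) + f (2*m+1)) := by
  induction n with
  | zero => simp
  | succ n ih =>
      have h : 2*(n+1) = (2*n+1)+1 := by ring
      rw [h, Finset.sum_range_succ, Finset.sum_range_succ, Finset.sum_range_succ, ih]
      ring

lemma avg_multi {f : ℝ → ℝ} (hf : ∀ n k, IntegrableOn f (dIcc n k) volume) (n k i : ℕ) :
    avg f n k = (∑ m ∈ Finset.range (2^i), avg f (n*2^i+m) (k+i)) / 2^i := by
  induction i with
  | zero => simp
  | succ i ih =>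
      have h2 : (2:ℕ)^(i+1) = 2*2^i := by ring
      have hrange : Finset.range (2^(i+1)) = Finset.range (2*2^i) := by rw [h2]
      have hsum : ∑ m ∈ Finset.range (2^(i+1)), avg f (n*2^(i+1)+m) (k+(i+1))
          = ∑ m ∈ Finset.range (2^i), 2 * avg f (n*2^i+m) (k+i) := by
        rw [hrange, sum_range_two_mul (fun m => avg f (n*2^(i+1)+m) (k+(i+1)))]
        apply Finset.sum_congr rfl
        intro m _
        have e1 : n*2^(i+1) + 2*m = 2*(n*2^i+m) := by ring
        have e2 : n*2^(i+1) + (2*m+1) = 2*(n*2^i+m)+1 := by ring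
        have e3 : k + (i+1) = (k+i)+1 := by ring
        simp only [e1, e2, e3]
        rw [avg_split (hf (n*2^i+m) (k+i))]
        ring
      rw [hsum, ← Finset.mul_sum, ih]
      have h3 : ((2:ℝ))^(i+1) = 2^i*2 := by ring
      rw [h3]
      have h4 : ((2:ℝ))^i ≠ 0 := by positivity
      field_simp



lemma avg_jensen_rpow {w : ℝ → ℝ} {r : ℝ} (hr : 1 ≤ r) (n k : ℕ)
    (hw : IntegrableOn w (dIcc n k) volume)
    (hwr : IntegrableOn (fun t => w t ^ r) (dIcc n k) volume)
    (hpos : ∀ᵐ t ∂(volume : Measure ℝ), 0 ≤ w t) :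
    (avg w n k) ^ r ≤ avg (fun t => w t ^ r) n k := by
  set μ := volume.restrict (dIcc n k) with hμ
  haveI : IsFiniteMeasure μ := ⟨by
    rw [hμ, Measure.restrict_apply_univ]
    exact lt_of_le_of_ne le_top (volume_dIcc_ne_top n k)⟩
  haveI : NeZero μ := ⟨by
    rw [hμ]
    intro h
    exact volume_dIcc_ne_zero n k ((Measure.restrict_eq_zero).mp h)⟩
  have hconv : ConvexOn ℝ (Ici 0) (fun x : ℝ => x ^ r) := convexOn_rpow hr
  have hcont : ContinuousOn (fun x : ℝ => x ^ r) (Ici 0) := fun x _ =>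
    (Real.continuousAt_rpow_const x r (Or.inr (le_trans zero_le_one hr))).continuousWithinAt
  have hfs : ∀ᵐ x ∂μ, w x ∈ Ici (0:ℝ) := ae_restrict_of_ae hpos
  have := hconv.map_average_le hcont isClosed_Ici hfs hw hwr
  rw [avg_eq_setAverage, avg_eq_setAverage]
  exact this

lemma measurable_stepfn (h : ℕ → ℝ) (c : ℝ) : Measurable (fun t : ℝ => h ⌊t * c⌋₊) :=
  measurable_from_nat.comp (Nat.measurable_floor.comp (measurable_id.mul_const c))

lemma integrableOn_stepfn_Icc (h : ℕ → ℝ) {c : ℝ} (hc : 0 < c) (a b : ℝ) :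
    IntegrableOn (fun t : ℝ => h ⌊t * c⌋₊) (Icc a b) volume := by
  set M : ℝ := (Finset.range (⌊b * c⌋₊ + 1)).sup' Finset.nonempty_range_add_one (fun m => |h m|)
    with hM
  apply Integrable.mono' (g := fun _ => M)
    (integrableOn_const measure_Icc_lt_top.ne)
    ((measurable_stepfn h c).aestronglyMeasurable.restrict)
  filter_upwards [ae_restrict_mem measurableSet_Icc] with t ht
  rw [Real.norm_eq_abs]
  exact Finset.le_sup' (fun m => |h m|) (by
    rw [Finset.mem_range, Nat.lt_succ_iff]
    exact Nat.floor_mono (mul_le_mul_of_nonneg_right ht.2 hc.le))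

lemma locallyIntegrable_stepfn (h : ℕ → ℝ) {c : ℝ} (hc : 0 < c) :
    LocallyIntegrable (fun t : ℝ => h ⌊t * c⌋₊) volume := by
  rw [locallyIntegrable_iff]
  intro s hs
  rcases hs.isBounded.subset_closedBall 0 with ⟨R, hR⟩
  apply (integrableOn_stepfn_Icc h hc (-R) R).mono_set
  intro t ht
  have := hR ht
  rw [Real.closedBall_eq_Icc] at this
  simpa using this

/-- `2 ^ k * 2 ^ (-(k+d)) = 2 ^ (-d)` style cast lemma -/
lemma cast_pow_mul_zpow (d k : ℕ) :
    ((2:ℝ) ^ d) * 2 ^ (-((k+d:ℕ):ℤ)) = 2 ^ (-(k:ℤ)) := by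
  rw [← zpow_natCast (2:ℝ) d, ← zpow_add₀ (two_ne_zero (α := ℝ))]
  congr 1
  push_cast
  ring

/-- a dyadic interval at scale `k + d` is contained in its ancestor cell at scale `k`. -/
lemma dIcc_subset_ancestor (n k d : ℕ) : dIcc n (k+d) ⊆ dIcc (n / 2^d) k := by
  have h1 : (n / 2^d) * 2^d ≤ n := Nat.div_mul_le_self n (2^d)
  have h2 : n + 1 ≤ (n / 2^d + 1) * 2^d := by
    have hmod := Nat.div_add_mod n (2^d)
    have hlt : n % 2^d < 2^d := Nat.mod_lt _ (by positivity)
    nlinarith [hmod, hlt]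
  intro t ht
  constructor
  · calc ((n / 2^d : ℕ):ℝ) * 2 ^ (-(k:ℤ))
        = ((n / 2^d : ℕ):ℝ) * ((2:ℝ)^d * 2 ^ (-((k+d:ℕ):ℤ))) := by rw [cast_pow_mul_zpow]
      _ = (((n / 2^d) * 2^d : ℕ):ℝ) * 2 ^ (-((k+d:ℕ):ℤ)) := by push_cast; ring
      _ ≤ (n:ℝ) * 2 ^ (-((k+d:ℕ):ℤ)) := by
          apply mul_le_mul_of_nonneg_right _ (two_zpow_pos _).le
          exact_mod_cast h1
      _ ≤ t := ht.1
  · calc t ≤ ((n:ℝ)+1) * 2 ^ (-((k+d:ℕ):ℤ)) := ht.2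
      _ ≤ (((n / 2^d + 1) * 2^d : ℕ):ℝ) * 2 ^ (-((k+d:ℕ):ℤ)) := by
          apply mul_le_mul_of_nonneg_right _ (two_zpow_pos _).le
          push_cast
          exact_mod_cast h2
      _ = (((n / 2^d : ℕ):ℝ)+1) * ((2:ℝ)^d * 2 ^ (-((k+d:ℕ):ℤ))) := by push_cast; ring
      _ = (((n / 2^d : ℕ):ℝ)+1) * 2 ^ (-(k:ℤ)) := by rw [cast_pow_mul_zpow]

/-- On the cell `[m 2^{-k}, (m+1) 2^{-k})` the step function at scale `k` is constant `= h m`. -/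
lemma stepfn_eq_on_cell (h : ℕ → ℝ) (m k : ℕ) {t : ℝ}
    (h1 : ((m:ℕ):ℝ) * 2 ^ (-(k:ℤ)) ≤ t) (h2 : t < (((m:ℕ):ℝ)+1) * 2 ^ (-(k:ℤ))) :
    h ⌊t * 2^(k:ℕ)⌋₊ = h m := by
  congr 1
  have hp : (0:ℝ) < 2^(k:ℕ) := by positivity
  have hz : ((2:ℝ)^(k:ℕ)) * 2 ^ (-(k:ℤ)) = 1 := by
    rw [← zpow_natCast (2:ℝ) k, ← zpow_add₀ (two_ne_zero (α := ℝ))]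
    simp
  have e1 : (m:ℝ) ≤ t * 2^(k:ℕ) := by
    have := mul_le_mul_of_nonneg_right h1 hp.le
    calc (m:ℝ) = (m:ℝ) * (2 ^ (-(k:ℤ)) * 2^(k:ℕ)) := by rw [mul_comm ((2:ℝ) ^ (-(k:ℤ))), hz]; ring
      _ = ((m:ℕ):ℝ) * 2 ^ (-(k:ℤ)) * 2^(k:ℕ) := by ring
      _ ≤ t * 2^(k:ℕ) := this
  have e2 : t * 2^(k:ℕ) < (m:ℝ) + 1 := by
    have := mul_lt_mul_of_pos_right h2 hp
    calc t * 2^(k:ℕ) < (((m:ℕ):ℝ)+1) * 2 ^ (-(k:ℤ)) * 2^(k:ℕ) := this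
      _ = ((m:ℝ)+1) * (2 ^ (-(k:ℤ)) * 2^(k:ℕ)) := by ring
      _ = (m:ℝ) + 1 := by rw [mul_comm ((2:ℝ) ^ (-(k:ℤ))), hz]; ring
  rw [Nat.floor_eq_iff (le_trans (Nat.cast_nonneg m) e1)]
  exact ⟨e1, e2⟩

/-- average of scale-κ step function over a dyadic interval at scale `k ≥ κ`. -/
lemma avg_stepfn (h : ℕ → ℝ) (κ n d : ℕ) :
    avg (fun t : ℝ => h ⌊t * 2^κ⌋₊) n (κ + d) = h (n / 2^d) := by
  set m := n / 2^d with hm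
  have hsub := dIcc_subset_ancestor n κ d
  have heq : EqOn (fun t : ℝ => h ⌊t * 2^κ⌋₊) (fun _ => h m)
      ((dIcc n (κ+d)) \ {(((m:ℕ):ℝ)+1) * 2 ^ (-(κ:ℤ))}) := by
    intro t ⟨ht, ht2⟩
    have hcell := hsub ht
    have hlt : t < (((m:ℕ):ℝ)+1) * 2 ^ (-(κ:ℤ)) :=
      lt_of_le_of_ne hcell.2 (by simpa using ht2)
    exact stepfn_eq_on_cell h m κ hcell.1 hlt
  have hae : avg (fun t : ℝ => h ⌊t * 2^κ⌋₊) n (κ+d) = avg (fun _ => h m) n (κ+d) := by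
    rw [avg, avg]
    congr 1
    apply setIntegral_congr_ae (by rw [dIcc]; exact measurableSet_Icc)
    filter_upwards [compl_mem_ae_iff.mpr
      (measure_singleton ((((m:ℕ):ℝ)+1) * 2 ^ (-(κ:ℤ))))] with t ht hmem
    exact heq ⟨hmem, ht⟩
  rw [hae, avg_const]



lemma one_le_factor {p H : ℝ} (hp : 1 < p) (hpH : p ≤ H) :
    1 ≤ H / p * ((p - 1)/(H - 1)) ^ ((p-1)/p) := by
  have hp0 : (0:ℝ) < p := lt_trans one_pos hp
  have hp1 : (0:ℝ) < p - 1 := by linarith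
  have hH1 : (0:ℝ) < H - 1 := by linarith
  set a : ℝ := (p-1)/p with ha
  have ha0 : 0 ≤ a := by positivity
  have ha1 : 1 - a = 1/p := by rw [ha]; field_simp; ring
  set x : ℝ := (H-1)/(p-1) with hx
  have hx1 : (1:ℝ) ≤ x := by rw [hx, le_div_iff₀ hp1]; linarith
  have hx0 : (0:ℝ) < x := lt_of_lt_of_le one_pos hx1
  have key : x ^ a ≤ H / p := by
    have hg := Real.geom_mean_le_arith_mean2_weighted (w₁ := a) (w₂ := 1-a) (p₁ := x) (p₂ := 1)
      ha0 (by rw [ha1]; positivity) hx0.le zero_le_one (by ring)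
    rw [Real.one_rpow, mul_one, mul_one] at hg
    calc x ^ a ≤ a * x + (1-a) := hg
      _ = H / p := by rw [ha1, ha, hx]; field_simp; ring
  have hxa : (0:ℝ) < x ^ a := Real.rpow_pos_of_pos hx0 a
  have hinv : ((p - 1)/(H - 1) : ℝ) ^ ((p-1)/p) = (x ^ a)⁻¹ := by
    rw [show (p-1)/(H-1) = x⁻¹ by rw [hx, inv_div], ← ha, Real.inv_rpow hx0.le]
  rw [hinv, ← div_eq_mul_inv, le_div_iff₀ hxa, one_mul]
  exact key

/-- Bernoulli consequence : `p ≤ (Q^p-1)/(Q-1)` for `Q ≥ 2 > 1`, `p ≥ 1`. -/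
lemma p_le_H {p Q : ℝ} (hp : 1 < p) (hQ : 2 ≤ Q) : p ≤ (Q ^ p - 1)/(Q - 1) := by
  have hQ1 : (0:ℝ) < Q - 1 := by linarith
  have hbern := one_add_mul_self_le_rpow_one_add (s := Q - 1) (by linarith) hp.le
  have hQQ : (1:ℝ) + (Q - 1) = Q := by ring
  rw [hQQ] at hbern
  rw [le_div_iff₀ hQ1]
  nlinarith

lemma fatou_integral {J : Set ℝ} {f : ℝ → ℝ} {fi : ℕ → ℝ → ℝ}
    (hfi_int : ∀ i, IntegrableOn (fi i) J volume)
    (hfi_nn : ∀ i, 0 ≤ᶠ[ae (volume.restrict J)] fi i)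
    (hconv : ∀ᵐ t ∂(volume.restrict J), Tendsto (fun i => fi i t) atTop (𝓝 (f t))) :
    ∫⁻ t in J, ENNReal.ofReal (f t) ≤
      liminf (fun i => ENNReal.ofReal (∫ t in J, fi i t)) atTop := by
  have heq : ∀ i, ENNReal.ofReal (∫ t in J, fi i t) = ∫⁻ t in J, ENNReal.ofReal (fi i t) :=
    fun i => ofReal_integral_eq_lintegral_ofReal (hfi_int i) (hfi_nn i)
  have hfun : (fun i => ENNReal.ofReal (∫ t in J, fi i t))
      = fun i => ∫⁻ t in J, ENNReal.ofReal (fi i t) := funext heq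
  rw [hfun]
  refine le_trans (le_of_eq ?_) (lintegral_liminf_le'
    (fun i => ENNReal.measurable_ofReal.comp_aemeasurable (hfi_int i).aemeasurable))
  apply lintegral_congr_ae
  filter_upwards [hconv] with t ht
  exact (((ENNReal.continuous_ofReal.tendsto _).comp ht).liminf_eq).symm

lemma avg_ite_step (g : ℝ → ℝ) (h : ℕ → ℝ) (c : ℝ) (n k : ℕ) :
    avg (fun t => if t < 0 then g t else h ⌊t * c⌋₊) n k = avg (fun t => h ⌊t * c⌋₊) n k :=
  avg_congr (fun t ht => by
    have : ¬ t < 0 := not_lt.mpr (dIcc_subset_Ici n k ht)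
    simp [this])

lemma locallyIntegrable_ite_step {g : ℝ → ℝ} (hg : LocallyIntegrable g volume) (h : ℕ → ℝ)
    {c : ℝ} (hc : 0 < c) :
    LocallyIntegrable (fun t => if t < 0 then g t else h ⌊t * c⌋₊) volume := by
  rw [locallyIntegrable_iff]
  intro s hs
  rcases hs.isBounded.subset_closedBall 0 with ⟨R, hR⟩
  have hR' : s ⊆ Icc (-R) R := by
    intro t ht
    have := hR ht
    rwa [Real.closedBall_eq_Icc, zero_sub, zero_add] at this
  apply IntegrableOn.mono_set _ hR'
  have hsplit : Icc (-R) R = (Icc (-R) R ∩ Iio 0) ∪ (Icc (-R) R ∩ Ici 0) := by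
    rw [← inter_union_distrib_left, Iio_union_Ici, inter_univ]
  rw [hsplit]
  apply IntegrableOn.union
  · exact ((hg.integrableOn_isCompact isCompact_Icc).mono_set inter_subset_left).congr_fun
      (fun t ht => by simp [mem_Iio.mp ht.2]) (measurableSet_Icc.inter measurableSet_Iio)
  · exact (((integrableOn_stepfn_Icc h hc (-R) R)).mono_set inter_subset_left).congr_fun
      (fun t ht => by simp [not_lt.mpr (mem_Ici.mp ht.2)]) (measurableSet_Icc.inter measurableSet_Ici)

lemma setIntegral_eq_avg (g : ℝ → ℝ) (n k : ℕ) :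
    ∫ t in dIcc n k, g t = 2 ^ (-(k:ℤ)) * avg g n k := by
  rw [avg, ← mul_assoc, ← zpow_add₀ (two_ne_zero (α := ℝ))]
  simp

lemma ae_tendsto_avg {f : ℝ → ℝ} (hf : LocallyIntegrable f volume) :
    ∀ᵐ t ∂(volume : Measure ℝ), 0 ≤ t →
      Tendsto (fun k : ℕ => avg f ⌊t * 2^(k:ℕ)⌋₊ k) atTop (𝓝 (f t)) := by
  have hvol : ∀ (x r : ℝ), volume (Metric.closedBall x (3*r)) ≤
      ((6:ℝ≥0) : ℝ≥0∞) * volume (Metric.closedBall x r) := by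
    intro x r
    rcases le_or_gt r 0 with hr | hr
    · refine le_trans (le_of_eq ?_) zero_le
      rw [Real.volume_closedBall]
      exact ENNReal.ofReal_eq_zero.mpr (by nlinarith)
    · rw [Real.volume_closedBall, Real.volume_closedBall]
      have h6 : ((6:ℝ≥0) : ℝ≥0∞) = ENNReal.ofReal (6:ℝ) := by
        rw [ENNReal.ofReal]
        norm_num
      rw [h6, ← ENNReal.ofReal_mul (by norm_num)]
      apply ENNReal.ofReal_le_ofReal
      nlinarith
  have hvit : ∀ x : ℝ, ∃ᶠ r in 𝓝[>] (0:ℝ),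
      volume (Metric.closedBall x (3*r)) ≤ ((6:ℝ≥0) : ℝ≥0∞) * volume (Metric.closedBall x r) :=
    fun x => Eventually.frequently (Eventually.of_forall (fun r => hvol x r))
  set v := Vitali.vitaliFamily (volume : Measure ℝ) 6 hvit with hv
  filter_upwards [v.ae_tendsto_average hf] with t ht htpos
  set s : ℕ → Set ℝ := fun k => dIcc ⌊t * 2^(k:ℕ)⌋₊ k with hs
  have hzk : ∀ k : ℕ, ((2:ℝ)^(k:ℕ)) * 2 ^ (-(k:ℤ)) = 1 := by
    intro k
    rw [← zpow_natCast (2:ℝ) k, ← zpow_add₀ (two_ne_zero (α := ℝ))]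
    simp
  have hmem : ∀ k, t ∈ s k := by
    intro k
    have hfl : ((⌊t * 2^(k:ℕ)⌋₊:ℕ):ℝ) ≤ t * 2^(k:ℕ) := Nat.floor_le (by positivity)
    have hfu : t * 2^(k:ℕ) < ((⌊t * 2^(k:ℕ)⌋₊:ℕ):ℝ) + 1 := Nat.lt_floor_add_one _
    constructor
    · calc ((⌊t * 2^(k:ℕ)⌋₊:ℕ):ℝ) * 2 ^ (-(k:ℤ))
          ≤ (t * 2^(k:ℕ)) * 2 ^ (-(k:ℤ)) :=
            mul_le_mul_of_nonneg_right hfl (two_zpow_pos _).le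
        _ = t := by rw [mul_assoc, hzk k, mul_one]
    · calc t = (t * 2^(k:ℕ)) * 2 ^ (-(k:ℤ)) := by rw [mul_assoc, hzk k, mul_one]
        _ ≤ (((⌊t * 2^(k:ℕ)⌋₊:ℕ):ℝ) + 1) * 2 ^ (-(k:ℤ)) :=
            mul_le_mul_of_nonneg_right hfu.le (two_zpow_pos _).le
  have hsub : ∀ k, s k ⊆ Metric.closedBall t ((2:ℝ) ^ (-(k:ℤ))) := by
    intro k u hu
    rw [Real.closedBall_eq_Icc]
    have h1 := (hmem k).1
    have h2 := (hmem k).2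
    have hu1 := hu.1
    have hu2 := hu.2
    constructor
    · have : ((⌊t * 2^(k:ℕ)⌋₊:ℕ):ℝ) * 2 ^ (-(k:ℤ)) ≥ t - 2 ^ (-(k:ℤ)) := by
        have := h2
        push_cast at this ⊢
        nlinarith [two_zpow_pos (-(k:ℤ))]
      linarith [hu.1]
    · have : (((⌊t * 2^(k:ℕ)⌋₊:ℕ):ℝ) + 1) * 2 ^ (-(k:ℤ)) ≤ t + 2 ^ (-(k:ℤ)) := by
        push_cast at h1 ⊢
        nlinarith [two_zpow_pos (-(k:ℤ))]
      linarith [hu.2]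
  have hsets : ∀ k, s k ∈ v.setsAt t := by
    intro k
    refine ⟨isClosed_Icc, ?_, ⟨(2:ℝ) ^ (-(k:ℤ)), hsub k, ?_⟩⟩
    · rw [hs]
      show (interior (dIcc _ k)).Nonempty
      rw [dIcc, interior_Icc]
      apply nonempty_Ioo.mpr
      nlinarith [two_zpow_pos (-(k:ℤ))]
    · rw [Real.volume_closedBall, volume_dIcc]
      have h6 : ((6:ℝ≥0) : ℝ≥0∞) = ENNReal.ofReal (6:ℝ) := by
        rw [ENNReal.ofReal]; norm_num
      rw [h6, ← ENNReal.ofReal_mul (by norm_num)]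
      apply ENNReal.ofReal_le_ofReal
      nlinarith [two_zpow_pos (-(k:ℤ))]
  have hdiam : Tendsto (fun k : ℕ => (2:ℝ) ^ (-(k:ℤ))) atTop (𝓝 0) := by
    have : (fun k : ℕ => (2:ℝ) ^ (-(k:ℤ))) = fun k : ℕ => (2⁻¹ : ℝ)^(k:ℕ) := by
      funext k
      rw [zpow_neg, ← inv_zpow, zpow_natCast]
    rw [this]
    exact tendsto_pow_atTop_nhds_zero_of_lt_one (by norm_num) (by norm_num)
  have htend : Tendsto s atTop (v.filterAt t) := by
    rw [VitaliFamily.tendsto_filterAt_iff]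
    refine ⟨Eventually.of_forall hsets, fun ε hε => ?_⟩
    filter_upwards [hdiam.eventually (gt_mem_nhds hε)] with k hk
    exact (hsub k).trans (Metric.closedBall_subset_closedBall hk.le)
  have hfinal := ht.comp htend
  have : (fun k : ℕ => avg f ⌊t * 2^(k:ℕ)⌋₊ k)
      = (fun a => ⨍ y in a, f y) ∘ s := by
    funext k
    rw [Function.comp_apply, hs, avg_eq_setAverage]
  rw [this]
  exact hfinal

end S8

set_option maxHeartbeats 2000000 in
/-- Let `p>1`, `δ>1`, `Q≥2`, `q<0`, with `H = (Q^p−1)/(Q−1)` and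
`ε = (H/p)·((p−1)/(H−1))^((p−1)/p)·δ`.  Suppose `F` is continuous on
`Ω_ε = {(x,y) : x>0, x^p ≤ y ≤ ε^p x^p}` and satisfies:
(a) `F(c, c^p) ≥ c^q` for every `c>0`; and
(b) for every weight `w ∈ RH_p^{δ,d}(J)` with `Db^d(w) ≤ Q` and every `I ∈ D(J)` with
children `I^±`, `F(⟨w⟩_I, ⟨w^p⟩_I) ≥ ½[F(⟨w⟩_{I⁺},⟨w^p⟩_{I⁺}) + F(⟨w⟩_{I⁻},⟨w^p⟩_{I⁻})]`.
Then for every weight `w ∈ RH_p^{δ,d}(J)` with `Db^d(w) ≤ Q`,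
`⟨w^q⟩_J ≤ F(⟨w⟩_J, ⟨w^p⟩_J)`.  Here `J = [N·2^(-K), (N+1)·2^(-K)]`. -/
theorem stmt8 (p δ Q H ε q : ℝ) (hp : 1 < p) (hδ : 1 < δ) (hQ : 2 ≤ Q) (hq : q < 0)
    (hH : H = (Q ^ p - 1) / (Q - 1))
    (hε : ε = H / p * ((p - 1) / (H - 1)) ^ ((p - 1) / p) * δ)
    (N K : ℕ) (F : ℝ → ℝ → ℝ)
    (hF_cont : ContinuousOn (fun z : ℝ × ℝ => F z.1 z.2)
      {z : ℝ × ℝ | 0 < z.1 ∧ z.1 ^ p ≤ z.2 ∧ z.2 ≤ ε ^ p * z.1 ^ p})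
    (hFa : ∀ c : ℝ, 0 < c → F c (c ^ p) ≥ c ^ q)
    (hFb : ∀ w : ℝ → ℝ,
      LocallyIntegrable w volume →
      LocallyIntegrable (fun t => w t ^ p) volume →
      (∀ᵐ t ∂(volume : Measure ℝ), 0 < w t) →
      (∀ j m : ℕ, m < 2 ^ j →
        (avg (fun t => w t ^ p) (N * 2 ^ j + m) (K + j)) ^ (1 / p)
          ≤ δ * avg w (N * 2 ^ j + m) (K + j)) →
      (∀ n k : ℕ, avg w (n / 2) k ≤ Q * avg w n (k + 1)) →
      ∀ j m : ℕ, m < 2 ^ j →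
        F (avg w (N * 2 ^ j + m) (K + j)) (avg (fun t => w t ^ p) (N * 2 ^ j + m) (K + j))
          ≥ (F (avg w (2 * (N * 2 ^ j + m)) (K + j + 1))
                (avg (fun t => w t ^ p) (2 * (N * 2 ^ j + m)) (K + j + 1))
              + F (avg w (2 * (N * 2 ^ j + m) + 1) (K + j + 1))
                  (avg (fun t => w t ^ p) (2 * (N * 2 ^ j + m) + 1) (K + j + 1))) / 2) :
    ∀ w : ℝ → ℝ,
      LocallyIntegrable w volume →
      LocallyIntegrable (fun t => w t ^ p) volume →
      (∀ᵐ t ∂(volume : Measure ℝ), 0 < w t) →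
      (∀ j m : ℕ, m < 2 ^ j →
        (avg (fun t => w t ^ p) (N * 2 ^ j + m) (K + j)) ^ (1 / p)
          ≤ δ * avg w (N * 2 ^ j + m) (K + j)) →
      (∀ n k : ℕ, avg w (n / 2) k ≤ Q * avg w n (k + 1)) →
      avg (fun t => w t ^ q) N K ≤ F (avg w N K) (avg (fun t => w t ^ p) N K) := by
  intro w h1 h2 h3 h4 h5
  have hp0 : (0:ℝ) < p := lt_trans one_pos hp
  have hp1 : (0:ℝ) ≤ 1/p := by positivity
  have hδ0 : (0:ℝ) < δ := lt_trans one_pos hδ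
  have hδε : δ ≤ ε := by
    have hf1 : 1 ≤ H / p * ((p - 1)/(H - 1)) ^ ((p-1)/p) :=
      S8.one_le_factor hp (hH ▸ S8.p_le_H hp hQ)
    calc δ = 1 * δ := (one_mul δ).symm
      _ ≤ (H / p * ((p - 1)/(H - 1)) ^ ((p-1)/p)) * δ :=
          mul_le_mul_of_nonneg_right hf1 hδ0.le
      _ = ε := hε.symm
  have hε0 : (0:ℝ) < ε := lt_of_lt_of_le hδ0 hδε
  have hwnn : ∀ᵐ t ∂(volume : Measure ℝ), 0 ≤ w t := h3.mono fun t ht => ht.le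
  have hwpnn : ∀ᵐ t ∂(volume : Measure ℝ), 0 ≤ w t ^ p :=
    h3.mono fun t ht => (Real.rpow_pos_of_pos ht p).le
  have hintw : ∀ n k, IntegrableOn w (dIcc n k) volume := fun n k => S8.integrableOn_dIcc h1 n k
  have hintwp : ∀ n k, IntegrableOn (fun t => w t ^ p) (dIcc n k) volume :=
    fun n k => S8.integrableOn_dIcc h2 n k
  have hcpos : ∀ m k, 0 < avg w m k := fun m k => S8.avg_pos (hintw m k) h3
  set c : ℕ → ℕ → ℝ := fun i m => avg w m (K+i) with hcdef
  have hcpos' : ∀ i m, 0 < c i m := fun i m => hcpos m (K+i)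
  have h2pos : ∀ i : ℕ, (0:ℝ) < 2^(K+i) := fun i => by positivity
  set wi : ℕ → ℝ → ℝ := fun i t => if t < 0 then w t else c i ⌊t * 2^(K+i)⌋₊ with hwidef
  have hwip : ∀ i, (fun t => wi i t ^ p)
      = fun t => if t < 0 then w t ^ p else (fun m => c i m ^ p) ⌊t * 2^(K+i)⌋₊ := by
    intro i; funext t
    by_cases h' : t < 0 <;> simp [hwidef, h']
  have hwiLI : ∀ i, LocallyIntegrable (wi i) volume :=
    fun i => S8.locallyIntegrable_ite_step h1 (c i) (h2pos i)
  have hwipLI : ∀ i, LocallyIntegrable (fun t => wi i t ^ p) volume := by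
    intro i; rw [hwip i]
    exact S8.locallyIntegrable_ite_step h2 (fun m => c i m ^ p) (h2pos i)
  have hwipos : ∀ i, ∀ᵐ t ∂(volume : Measure ℝ), 0 < wi i t := by
    intro i
    filter_upwards [h3] with t ht
    by_cases h' : t < 0
    · simpa [hwidef, h'] using ht
    · simpa [hwidef, h'] using hcpos' i _
  have hwinn : ∀ i, ∀ᵐ t ∂(volume : Measure ℝ), 0 ≤ wi i t :=
    fun i => (hwipos i).mono fun t ht => ht.le
  have havg_wi : ∀ i n k, avg (wi i) n k = avg (fun t => c i ⌊t * 2^(K+i)⌋₊) n k :=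
    fun i n k => S8.avg_ite_step w (c i) _ n k
  have havg_wip : ∀ i n k, avg (fun t => wi i t ^ p) n k
      = avg (fun t => (fun m => c i m ^ p) ⌊t * 2^(K+i)⌋₊) n k := by
    intro i n k; rw [hwip i]; exact S8.avg_ite_step (fun t => w t ^ p) (fun m => c i m ^ p) (2^(K+i)) n k
  have hfine : ∀ (h' : ℕ → ℝ) (i n d : ℕ),
      avg (fun t : ℝ => h' ⌊t * 2^(K+i)⌋₊) n ((K+i)+d) = h' (n / 2^d) :=
    fun h' i n d => S8.avg_stepfn h' (K+i) n d
  have hfine0 : ∀ (h' : ℕ → ℝ) (i n : ℕ), avg (fun t : ℝ => h' ⌊t * 2^(K+i)⌋₊) n (K+i) = h' n := by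
    intro h' i n
    simpa using hfine h' i n 0
  have hstepLI : ∀ (h' : ℕ → ℝ) (i : ℕ), LocallyIntegrable (fun t : ℝ => h' ⌊t * 2^(K+i)⌋₊) volume :=
    fun h' i => S8.locallyIntegrable_stepfn h' (h2pos i)
  have hcoarse_eq : ∀ i d k, k + d = K + i → ∀ n,
      avg (fun t => c i ⌊t * 2^(K+i)⌋₊) n k = avg w n k := by
    intro i d
    induction d with
    | zero =>
        intro k hk n
        have hkk : k = K + i := by omega
        subst hkk
        exact hfine0 (c i) i n
    | succ d ih =>
        intro k hk n
        have hk' : (k+1) + d = K+i := by omega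
        rw [S8.avg_split (S8.integrableOn_dIcc (hstepLI (c i) i) n k),
            S8.avg_split (hintw n k), ih (k+1) hk', ih (k+1) hk']
  have hcoarse_le : ∀ i d k, k + d = K + i → ∀ n,
      avg (fun t => (fun m => c i m ^ p) ⌊t * 2^(K+i)⌋₊) n k ≤ avg (fun t => w t ^ p) n k := by
    intro i d
    induction d with
    | zero =>
        intro k hk n
        have hkk : k = K + i := by omega
        subst hkk
        rw [hfine0 (fun m => c i m ^ p) i n]
        exact S8.avg_jensen_rpow hp.le n (K+i) (hintw _ _) (hintwp _ _) hwnn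
    | succ d ih =>
        intro k hk n
        have hk' : (k+1) + d = K+i := by omega
        rw [S8.avg_split (S8.integrableOn_dIcc (hstepLI (fun m => c i m ^ p) i) n k),
            S8.avg_split (hintwp n k)]
        have hA := ih (k+1) hk' (2*n)
        have hB := ih (k+1) hk' (2*n+1)
        linarith
  have hRH : ∀ i j m : ℕ, m < 2 ^ j →
      (avg (fun t => wi i t ^ p) (N*2^j+m) (K+j)) ^ (1/p) ≤ δ * avg (wi i) (N*2^j+m) (K+j) := by
    intro i j m hm
    rw [havg_wip, havg_wi]
    rcases le_or_gt j i with hj | hj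
    · have hd : (K+j) + (i-j) = K + i := by omega
      rw [hcoarse_eq i (i-j) (K+j) hd]
      have hle := hcoarse_le i (i-j) (K+j) hd (N*2^j+m)
      have hnn : 0 ≤ avg (fun t => (fun m => c i m ^ p) ⌊t * 2^(K+i)⌋₊) (N*2^j+m) (K+j) :=
        S8.avg_nonneg (Eventually.of_forall fun t => (Real.rpow_pos_of_pos (hcpos' i _) p).le)
      calc (avg (fun t => (fun m => c i m ^ p) ⌊t * 2^(K+i)⌋₊) (N*2^j+m) (K+j)) ^ (1/p)
          ≤ (avg (fun t => w t ^ p) (N*2^j+m) (K+j)) ^ (1/p) :=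
            Real.rpow_le_rpow hnn hle hp1
        _ ≤ δ * avg w (N*2^j+m) (K+j) := h4 j m hm
    · obtain ⟨d, hd⟩ : ∃ d, j = i + (d+1) := ⟨j - i - 1, by omega⟩
      subst hd
      have hd2 : K + (i + (d+1)) = (K+i) + (d+1) := by omega
      rw [hd2, hfine (fun m => c i m ^ p) i (N*2^(i+(d+1))+m) (d+1), hfine (c i) i (N*2^(i+(d+1))+m) (d+1)]
      have hccp : 0 < c i ((N*2^(i+(d+1))+m) / 2^(d+1)) := hcpos' i _
      have hcan : (c i ((N*2^(i+(d+1))+m) / 2^(d+1)) ^ p) ^ (1/p)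
          = c i ((N*2^(i+(d+1))+m) / 2^(d+1)) := by
        rw [← Real.rpow_mul hccp.le, mul_one_div, div_self hp0.ne', Real.rpow_one]
      rw [hcan]
      nlinarith [hccp, hδ]
  have hDb : ∀ i n k : ℕ, avg (wi i) (n/2) k ≤ Q * avg (wi i) n (k+1) := by
    intro i n k
    rw [havg_wi, havg_wi]
    rcases le_or_gt (k+1) (K+i) with hk | hk
    · rw [hcoarse_eq i (K+i-k) k (by omega), hcoarse_eq i (K+i-(k+1)) (k+1) (by omega)]
      exact h5 n k
    · obtain ⟨d, hd⟩ : ∃ d, k = (K+i) + d := ⟨k - (K+i), by omega⟩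
      subst hd
      have e2 : (K+i)+d+1 = (K+i)+(d+1) := by omega
      rw [e2, hfine (c i) i (n/2) d, hfine (c i) i n (d+1)]
      have hidx : (n/2) / 2^d = n / 2^(d+1) := by
        rw [Nat.div_div_eq_div_mul]
        congr 1
        rw [pow_succ]
        ring
      rw [hidx]
      exact le_mul_of_one_le_left (hcpos' i _).le (by linarith)
  have hiter : ∀ i : ℕ,
      (∑ m ∈ Finset.range (2^i), F (avg (wi i) (N*2^i+m) (K+i))
        (avg (fun t => wi i t ^ p) (N*2^i+m) (K+i))) / 2^i
      ≤ F (avg (wi i) N K) (avg (fun t => wi i t ^ p) N K) := by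
    intro i
    have hstep := hFb (wi i) (hwiLI i) (hwipLI i) (hwipos i) (hRH i) (hDb i)
    set G : ℕ → ℝ := fun j => (∑ m ∈ Finset.range (2^j), F (avg (wi i) (N*2^j+m) (K+j))
        (avg (fun t => wi i t ^ p) (N*2^j+m) (K+j))) / 2^j with hG
    have hmono : ∀ j : ℕ, G (j+1) ≤ G j := by
      intro j
      simp only [hG]
      have hrange : Finset.range (2^(j+1)) = Finset.range (2*2^j) := by
        congr 1; rw [pow_succ]; ring
      rw [hrange, S8.sum_range_two_mul
        (fun m => F (avg (wi i) (N*2^(j+1)+m) (K+(j+1)))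
          (avg (fun t => wi i t ^ p) (N*2^(j+1)+m) (K+(j+1)))) (2^j)]
      have hsum : ∑ m ∈ Finset.range (2^j),
            (F (avg (wi i) (N*2^(j+1)+2*m) (K+(j+1)))
              (avg (fun t => wi i t ^ p) (N*2^(j+1)+2*m) (K+(j+1)))
            + F (avg (wi i) (N*2^(j+1)+(2*m+1)) (K+(j+1)))
              (avg (fun t => wi i t ^ p) (N*2^(j+1)+(2*m+1)) (K+(j+1))))
          ≤ ∑ m ∈ Finset.range (2^j), 2 * F (avg (wi i) (N*2^j+m) (K+j))
              (avg (fun t => wi i t ^ p) (N*2^j+m) (K+j)) := by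
        apply Finset.sum_le_sum
        intro m hm
        have hst := hstep j m (Finset.mem_range.mp hm)
        have e1 : N*2^(j+1)+2*m = 2*(N*2^j+m) := by ring
        have e2 : N*2^(j+1)+(2*m+1) = 2*(N*2^j+m)+1 := by ring
        have e3 : K+(j+1) = K+j+1 := by omega
        rw [e1, e2, e3]
        linarith
      calc (∑ m ∈ Finset.range (2^j),
            (F (avg (wi i) (N*2^(j+1)+2*m) (K+(j+1)))
              (avg (fun t => wi i t ^ p) (N*2^(j+1)+2*m) (K+(j+1)))
            + F (avg (wi i) (N*2^(j+1)+(2*m+1)) (K+(j+1)))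
              (avg (fun t => wi i t ^ p) (N*2^(j+1)+(2*m+1)) (K+(j+1))))) / 2^(j+1)
          ≤ (∑ m ∈ Finset.range (2^j), 2 * F (avg (wi i) (N*2^j+m) (K+j))
              (avg (fun t => wi i t ^ p) (N*2^j+m) (K+j))) / 2^(j+1) := by
            exact div_le_div_of_nonneg_right hsum (by positivity)
        _ = (∑ m ∈ Finset.range (2^j), F (avg (wi i) (N*2^j+m) (K+j))
              (avg (fun t => wi i t ^ p) (N*2^j+m) (K+j))) / 2^j := by
            rw [← Finset.mul_sum, pow_succ]
            have : ((2:ℝ))^j ≠ 0 := by positivity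
            field_simp
    have hchain : ∀ j, G j ≤ G 0 := by
      intro j
      induction j with
      | zero => exact le_rfl
      | succ j ih => exact le_trans (hmono j) ih
    have h0 : G 0 = F (avg (wi i) N K) (avg (fun t => wi i t ^ p) N K) := by
      simp [hG]
    calc (∑ m ∈ Finset.range (2^i), F (avg (wi i) (N*2^i+m) (K+i))
        (avg (fun t => wi i t ^ p) (N*2^i+m) (K+i))) / 2^i = G i := rfl
      _ ≤ G 0 := hchain i
      _ = _ := h0
  -- top-level averages
  set xJ := avg w N K with hxJ
  set yJ := avg (fun t => w t ^ p) N K with hyJ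
  have hxJpos : 0 < xJ := hcpos N K
  have hyJnn : 0 ≤ yJ := S8.avg_nonneg hwpnn
  set yi : ℕ → ℝ := fun i => avg (fun t => wi i t ^ p) N K with hyidef
  have htop1 : ∀ i, avg (wi i) N K = xJ := by
    intro i
    rw [havg_wi]
    exact hcoarse_eq i i K rfl N
  set Ti : ℕ → ℝ := fun i => (∑ m ∈ Finset.range (2^i), (c i (N*2^i+m)) ^ q) / 2^i with hTidef
  have hTi_nn : ∀ i, 0 ≤ Ti i := by
    intro i
    apply div_nonneg _ (by positivity)
    apply Finset.sum_nonneg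
    intro m _
    exact (Real.rpow_pos_of_pos (hcpos' i _) q).le
  have hTi_le : ∀ i, Ti i ≤ F xJ (yi i) := by
    intro i
    have hit := hiter i
    rw [htop1 i] at hit
    refine le_trans ?_ hit
    apply div_le_div_of_nonneg_right _ (by positivity)
    apply Finset.sum_le_sum
    intro m hm
    have hv1 : avg (wi i) (N*2^i+m) (K+i) = c i (N*2^i+m) := by
      rw [havg_wi]; exact hfine0 (c i) i _
    have hv2 : avg (fun t => wi i t ^ p) (N*2^i+m) (K+i) = (c i (N*2^i+m)) ^ p := by
      rw [havg_wip]; exact hfine0 (fun m => c i m ^ p) i _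
    rw [hv1, hv2]
    exact hFa _ (hcpos' i _)
  have hyile : ∀ i, yi i ≤ yJ := by
    intro i
    rw [hyidef]
    simp only
    rw [havg_wip]
    exact hcoarse_le i i K rfl N
  have hyinn : ∀ i, 0 ≤ yi i := fun i =>
    S8.avg_nonneg ((hwipos i).mono fun t ht => (Real.rpow_pos_of_pos ht p).le)
  -- a.e. convergence of the discretizations on J
  have hdiff := S8.ae_tendsto_avg h1
  have hJae : ∀ᵐ t ∂(volume.restrict (dIcc N K)), 0 ≤ t ∧ 0 < w t ∧
      Tendsto (fun i => c i ⌊t * 2^(K+i)⌋₊) atTop (𝓝 (w t)) := by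
    have hmeas : MeasurableSet (dIcc N K) := measurableSet_Icc
    filter_upwards [ae_restrict_mem hmeas, ae_restrict_of_ae h3, ae_restrict_of_ae hdiff]
      with t ht hw hconv
    have ht0 : 0 ≤ t := S8.dIcc_subset_Ici N K ht
    refine ⟨ht0, hw, ?_⟩
    have hcomp := (hconv ht0).comp (tendsto_add_atTop_nat K)
    apply Tendsto.congr _ hcomp
    intro i
    simp only [Function.comp_apply]
    rw [Nat.add_comm i K]
  -- convergence of yi to yJ
  have hconv_p : Tendsto yi atTop (𝓝 yJ) := by
    have hconv_ae : ∀ᵐ t ∂(volume.restrict (dIcc N K)),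
        Tendsto (fun i => (fun m => c i m ^ p) ⌊t * 2^(K+i)⌋₊) atTop (𝓝 (w t ^ p)) := by
      filter_upwards [hJae] with t ht
      obtain ⟨ht0, hw, hcv⟩ := ht
      exact ((Real.continuousAt_rpow_const (w t) p (Or.inl hw.ne')).tendsto).comp hcv
    have hFatou := S8.fatou_integral (J := dIcc N K)
      (fi := fun i => fun t : ℝ => (fun m => c i m ^ p) ⌊t * 2^(K+i)⌋₊) (f := fun t => w t ^ p)
      (fun i => S8.integrableOn_dIcc (hstepLI (fun m => c i m ^ p) i) N K)
      (fun i => Eventually.of_forall fun t => (Real.rpow_pos_of_pos (hcpos' i _) p).le)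
      hconv_ae
    have hIeq : ∀ i, (∫ t in dIcc N K, (fun m => c i m ^ p) ⌊t * 2^(K+i)⌋₊)
        = 2 ^ (-(K:ℤ)) * yi i := by
      intro i
      rw [S8.setIntegral_eq_avg]
      congr 1
      rw [hyidef]
      simp only
      rw [havg_wip]
    have hJeq : (∫ t in dIcc N K, w t ^ p) = 2 ^ (-(K:ℤ)) * yJ := by
      rw [S8.setIntegral_eq_avg, hyJ]
    have hL : ENNReal.ofReal (2 ^ (-(K:ℤ)) * yJ) ≤
        liminf (fun i => ENNReal.ofReal (2 ^ (-(K:ℤ)) * yi i)) atTop := by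
      have h1' : ENNReal.ofReal (2 ^ (-(K:ℤ)) * yJ)
          = ∫⁻ t in dIcc N K, ENNReal.ofReal (w t ^ p) := by
        rw [← hJeq]
        exact ofReal_integral_eq_lintegral_ofReal (hintwp N K) (ae_restrict_of_ae hwpnn)
      rw [h1']
      refine le_trans hFatou (le_of_eq ?_)
      congr 1
      funext i
      rw [hIeq i]
    set A := ENNReal.ofReal (2 ^ (-(K:ℤ)) * yJ) with hA
    set ai : ℕ → ℝ≥0∞ := fun i => ENNReal.ofReal (2 ^ (-(K:ℤ)) * yi i) with hai
    have hup : ∀ i, ai i ≤ A := fun i => ENNReal.ofReal_le_ofReal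
      (mul_le_mul_of_nonneg_left (hyile i) (S8.two_zpow_pos _).le)
    have hls : limsup ai atTop ≤ A := limsup_le_of_le (by isBoundedDefault) (Eventually.of_forall hup)
    have hlimsup_eq : limsup ai atTop = A :=
      le_antisymm hls (le_trans hL (liminf_le_limsup))
    have hliminf_eq : liminf ai atTop = A :=
      le_antisymm (le_trans (liminf_le_limsup) hls) hL
    have htendA : Tendsto ai atTop (𝓝 A) := tendsto_of_liminf_eq_limsup hliminf_eq hlimsup_eq
    have htReal : Tendsto (fun i => (ai i).toReal) atTop (𝓝 A.toReal) :=
      (ENNReal.tendsto_toReal (by rw [hA]; exact ENNReal.ofReal_ne_top)).comp htendA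
    have htR2 : ∀ i, (ai i).toReal = 2 ^ (-(K:ℤ)) * yi i := fun i =>
      ENNReal.toReal_ofReal (mul_nonneg (S8.two_zpow_pos _).le (hyinn i))
    have hAtR : A.toReal = 2 ^ (-(K:ℤ)) * yJ :=
      ENNReal.toReal_ofReal (mul_nonneg (S8.two_zpow_pos _).le hyJnn)
    simp only [htR2, hAtR] at htReal
    have hfin := htReal.const_mul ((2:ℝ)^(K:ℤ))
    have hcancel : ∀ x : ℝ, (2:ℝ)^(K:ℤ) * ((2:ℝ)^(-(K:ℤ)) * x) = x := by
      intro x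
      rw [← mul_assoc, ← zpow_add₀ (two_ne_zero (α := ℝ))]
      simp
    simp only [hcancel] at hfin
    exact hfin
  -- membership of points in the domain of F
  have hyJle : yJ ≤ ε^p * xJ^p := by
    have h40 := h4 0 0 (by norm_num)
    simp only [pow_zero, Nat.mul_one, Nat.add_zero, mul_one, add_zero] at h40
    have hyy : yJ = (yJ ^ (1/p)) ^ p := by
      rw [← Real.rpow_mul hyJnn, one_div, inv_mul_cancel₀ hp0.ne', Real.rpow_one]
    calc yJ = (yJ ^ (1/p)) ^ p := hyy
      _ ≤ (δ * xJ) ^ p := Real.rpow_le_rpow (Real.rpow_nonneg hyJnn _) h40 hp0.le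
      _ ≤ (ε * xJ) ^ p := Real.rpow_le_rpow (by positivity)
          (mul_le_mul_of_nonneg_right hδε hxJpos.le) hp0.le
      _ = ε^p * xJ^p := Real.mul_rpow hε0.le hxJpos.le
  have hzJ : ((xJ, yJ) : ℝ × ℝ) ∈ {z : ℝ × ℝ | 0 < z.1 ∧ z.1 ^ p ≤ z.2 ∧ z.2 ≤ ε ^ p * z.1 ^ p} :=
    ⟨hxJpos, S8.avg_jensen_rpow hp.le N K (hintw N K) (hintwp N K) hwnn, hyJle⟩
  have hzi : ∀ i, ((xJ, yi i) : ℝ × ℝ) ∈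
      {z : ℝ × ℝ | 0 < z.1 ∧ z.1 ^ p ≤ z.2 ∧ z.2 ≤ ε ^ p * z.1 ^ p} := by
    intro i
    refine ⟨hxJpos, ?_, le_trans (hyile i) hyJle⟩
    have hj := S8.avg_jensen_rpow hp.le N K (S8.integrableOn_dIcc (hwiLI i) N K)
      (S8.integrableOn_dIcc (hwipLI i) N K) (hwinn i)
    rw [htop1 i] at hj
    exact hj
  have hLtend : Tendsto (fun i => F xJ (yi i)) atTop (𝓝 (F xJ yJ)) := by
    have hw2 : Tendsto (fun i => ((xJ, yi i) : ℝ × ℝ)) atTop (𝓝 ((xJ, yJ) : ℝ × ℝ)) :=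
      tendsto_const_nhds.prodMk_nhds hconv_p
    have hcw := hF_cont (xJ, yJ) hzJ
    exact hcw.tendsto.comp (tendsto_nhdsWithin_of_tendsto_nhds_of_eventually_within _ hw2
      (Eventually.of_forall hzi))
  have hL0 : 0 ≤ F xJ yJ :=
    ge_of_tendsto hLtend (Eventually.of_forall fun i => le_trans (hTi_nn i) (hTi_le i))
  -- the q-side Fatou argument
  have hconv_q : ∀ᵐ t ∂(volume.restrict (dIcc N K)),
      Tendsto (fun i => (fun m => c i m ^ q) ⌊t * 2^(K+i)⌋₊) atTop (𝓝 (w t ^ q)) := by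
    filter_upwards [hJae] with t ht
    obtain ⟨ht0, hw, hcv⟩ := ht
    exact ((Real.continuousAt_rpow_const (w t) q (Or.inl hw.ne')).tendsto).comp hcv
  have hFq := S8.fatou_integral (J := dIcc N K)
      (fi := fun i => fun t : ℝ => (fun m => c i m ^ q) ⌊t * 2^(K+i)⌋₊) (f := fun t => w t ^ q)
      (fun i => S8.integrableOn_dIcc (hstepLI (fun m => c i m ^ q) i) N K)
      (fun i => Eventually.of_forall fun t => (Real.rpow_pos_of_pos (hcpos' i _) q).le)
      hconv_q
  have hIq : ∀ i, (∫ t in dIcc N K, (fun m => c i m ^ q) ⌊t * 2^(K+i)⌋₊)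
      = 2 ^ (-(K:ℤ)) * Ti i := by
    intro i
    rw [S8.setIntegral_eq_avg]
    congr 1
    rw [S8.avg_multi (fun n k => S8.integrableOn_dIcc (hstepLI (fun m => c i m ^ q) i) n k) N K i]
    rw [hTidef]
    simp only
    congr 1
    apply Finset.sum_congr rfl
    intro m _
    exact hfine0 (fun m => c i m ^ q) i (N*2^i+m)
  have hLq : (∫⁻ t in dIcc N K, ENNReal.ofReal (w t ^ q))
      ≤ ENNReal.ofReal (2 ^ (-(K:ℤ)) * F xJ yJ) := by
    refine le_trans hFq ?_
    have hmon : liminf (fun i => ENNReal.ofReal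
          (∫ t in dIcc N K, (fun m => c i m ^ q) ⌊t * 2^(K+i)⌋₊)) atTop
        ≤ liminf (fun i => ENNReal.ofReal (2 ^ (-(K:ℤ)) * F xJ (yi i))) atTop := by
      apply liminf_le_liminf (Eventually.of_forall fun i => ?_)
      rw [hIq i]
      exact ENNReal.ofReal_le_ofReal
        (mul_le_mul_of_nonneg_left (hTi_le i) (S8.two_zpow_pos _).le)
    refine le_trans hmon (le_of_eq ?_)
    have htnd : Tendsto (fun i => ENNReal.ofReal (2 ^ (-(K:ℤ)) * F xJ (yi i))) atTop
        (𝓝 (ENNReal.ofReal (2 ^ (-(K:ℤ)) * F xJ yJ))) :=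
      (ENNReal.continuous_ofReal.tendsto _).comp (hLtend.const_mul _)
    exact htnd.liminf_eq
  -- conclusion
  have hwq_meas : AEStronglyMeasurable (fun t => w t ^ q) (volume.restrict (dIcc N K)) :=
    ((h1.aestronglyMeasurable.aemeasurable.pow aemeasurable_const).aestronglyMeasurable).restrict
  have hwq_nn : 0 ≤ᶠ[ae (volume.restrict (dIcc N K))] (fun t => w t ^ q) :=
    ae_restrict_of_ae (h3.mono fun t ht => (Real.rpow_pos_of_pos ht q).le)
  have hieq : (∫ t in dIcc N K, w t ^ q)
      = (∫⁻ t in dIcc N K, ENNReal.ofReal (w t ^ q)).toReal :=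
    integral_eq_lintegral_of_nonneg_ae hwq_nn hwq_meas
  have hle2 : (∫ t in dIcc N K, w t ^ q) ≤ 2 ^ (-(K:ℤ)) * F xJ yJ := by
    rw [hieq]
    calc (∫⁻ t in dIcc N K, ENNReal.ofReal (w t ^ q)).toReal
        ≤ (ENNReal.ofReal (2 ^ (-(K:ℤ)) * F xJ yJ)).toReal :=
          ENNReal.toReal_mono ENNReal.ofReal_ne_top hLq
      _ = 2 ^ (-(K:ℤ)) * F xJ yJ :=
          ENNReal.toReal_ofReal (mul_nonneg (S8.two_zpow_pos _).le hL0)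
  show avg (fun t => w t ^ q) N K ≤ F xJ yJ
  rw [avg]
  calc (2:ℝ)^(K:ℤ) * ∫ t in dIcc N K, w t ^ q
      ≤ (2:ℝ)^(K:ℤ) * (2 ^ (-(K:ℤ)) * F xJ yJ) :=
        mul_le_mul_of_nonneg_left hle2 (S8.two_zpow_pos _).le
    _ = F xJ yJ := by
        rw [← mul_assoc, ← zpow_add₀ (two_ne_zero (α := ℝ))]
        simp
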